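/- Let T > 0 and let h : [0,T] × ℝ → ℝ be an L¹-Carathéodory function. Let J = [x₁,x₂] ⊆ [0,T] be a closed interval such that h(x,s) ≥ 0 for a.e. x ∈ J and every s ≥ 0. Assume there exists a non-negative q_∞ ∈ L¹(J), not a.e. zero, such that liminf_{s→+∞} h(x,s)/s ≥ q_∞(x) uniformly for a.e. x ∈ J, meaning: for every ε > 0 there exists s₀ > 0 such that h(x,s) ≥ (q_∞(x) − ε) s for a.e. x ∈ J and every s ≥ s₀. Assume further that there exist μ with 0 < μ < 1 and a C¹ function φ : J → ℝ with absolutely continuous derivative, φ > 0 on the interior of J, φ(x₁) = φ(x₂) = 0, and φ'' + μ q_∞(x) φ = 0 a.e. on J (i.e., the first eigenvalue μ_J of φ'' + λ q_∞(x) φ = 0 with φ = 0 on ∂J satisfies μ_J < 1). Then there exists R_J > 0 such that for every L¹-Carathéodory function k : [0,T] × [0,∞) → ℝ with k(x,s) ≥ h(x,s) for a.e. x ∈ J and all s ≥ 0, every solution u of u'' + k(x,u) = 0 on [0,T] with u(x) ≥ 0 for all x ∈ [0,T], satisfying either the Neumann boundary conditions or the periodic boundary conditions, satisfies max_{x ∈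 J} u(x) < R_J. -/

import Mathlib

open MeasureTheory Set Filter Topology

/-- `u` (with derivative `u'`) is a C¹ solution of `u'' + f(x) = 0` on `[0,T]`:
`u'` is absolutely continuous and the equation holds a.e., expressed via the
integral equation `u'(x) = u'(0) − ∫₀ˣ f(t) dt`. -/
def IsSolOn (T : ℝ) (f : ℝ → ℝ) (u u' : ℝ → ℝ) : Prop :=
  (∀ x ∈ Icc (0:ℝ) T, HasDerivWithinAt u (u' x) (Icc (0:ℝ) T) x) ∧
  ContinuousOn u' (Icc (0:ℝ) T) ∧
  ∀ x ∈ Icc (0:ℝ) T, u' x = u' 0 - ∫ t in (0:ℝ)..x, f t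

/-- The equation `u'' + a(x) g(u) = 0` on `[0,T]` has a positive solution
satisfying the Neumann boundary conditions. -/
def PosSolNeumann (T : ℝ) (a g : ℝ → ℝ) : Prop :=
  ∃ u u' : ℝ → ℝ, IsSolOn T (fun t => a t * g (u t)) u u' ∧
    (∀ x ∈ Icc (0:ℝ) T, 0 < u x) ∧ u' 0 = 0 ∧ u' T = 0

/-- The equation `u'' + a(x) g(u) = 0` on `[0,T]` has a positive solution
satisfying the periodic boundary conditions. -/
def PosSolPeriodic (T : ℝ) (a g : ℝ → ℝ) : Prop :=
  ∃ u u' : ℝ → ℝ, IsSolOn T (fun t => a t * g (u t)) u u' ∧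
    (∀ x ∈ Icc (0:ℝ) T, 0 < u x) ∧ u 0 = u T ∧ u' 0 = u' T

/-- `h : [0,T] × ℝ → ℝ` is an `L¹`-Carathéodory function. -/
def L1Caratheodory (T : ℝ) (h : ℝ → ℝ → ℝ) : Prop :=
  (∀ s : ℝ, Measurable fun x => h x s) ∧
  (∀ᵐ x ∂(volume.restrict (Icc (0:ℝ) T)), Continuous fun s => h x s) ∧
  ∀ ρ : ℝ, 0 < ρ → ∃ γ : ℝ → ℝ, (∀ x, 0 ≤ γ x) ∧
    IntegrableOn γ (Icc (0:ℝ) T) volume ∧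
    ∀ᵐ x ∂(volume.restrict (Icc (0:ℝ) T)), ∀ s : ℝ, |s| ≤ ρ → |h x s| ≤ γ x

/-- `k : [0,T] × [0,∞) → ℝ` is an `L¹`-Carathéodory function. -/
def L1CaratheodoryNonneg (T : ℝ) (k : ℝ → ℝ → ℝ) : Prop :=
  (∀ s : ℝ, 0 ≤ s → Measurable fun x => k x s) ∧
  (∀ᵐ x ∂(volume.restrict (Icc (0:ℝ) T)), ContinuousOn (fun s => k x s) (Ici (0:ℝ))) ∧
  ∀ ρ : ℝ, 0 < ρ → ∃ γ : ℝ → ℝ, (∀ x, 0 ≤ γ x) ∧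
    IntegrableOn γ (Icc (0:ℝ) T) volume ∧
    ∀ᵐ x ∂(volume.restrict (Icc (0:ℝ) T)), ∀ s : ℝ, 0 ≤ s → s ≤ ρ → |k x s| ≤ γ x

/-- A priori bound on the intervals where the nonlinearity is non-negative:
under the eigenvalue condition `μ_J < 1` (witnessed by a positive first
Dirichlet eigenpair of `φ'' + μ q_∞(x) φ = 0` on `J = [x₁,x₂]`), there is a
bound `R_J`, independent of `k`, for the maximum over `J` of any non-negative
Neumann or periodic solution of `u'' + k(x,u) = 0` with `k ≥ h` a.e. on `J`. -/
lemma my_parts (a b : ℝ) (hab : a ≤ b) (F ψ ψ' : ℝ → ℝ)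
    (hF : IntegrableOn F (Icc a b) volume)
    (hψ : ∀ x ∈ Icc a b, HasDerivWithinAt ψ (ψ' x) (Icc a b) x)
    (hψ' : ContinuousOn ψ' (Icc a b)) :
    ∫ x in Icc a b, (∫ t in a..x, F t) * ψ' x =
      ∫ t in Icc a b, F t * (ψ b - ψ t) := by
  set ν := volume.restrict (Icc a b) with hν
  have hψc : ContinuousOn ψ (Icc a b) := fun x hx => (hψ x hx).continuousWithinAt
  have hψ'int : IntegrableOn ψ' (Icc a b) volume :=
    hψ'.integrableOn_compact isCompact_Icc
  have step1 : ∀ x ∈ Icc a b, (∫ t in a..x, F t) * ψ' x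
      = ∫ t, ((Ioc a x).indicator F t) * ψ' x ∂ν := by
    intro x hx
    rw [integral_mul_const, integral_indicator measurableSet_Ioc, hν,
      Measure.restrict_restrict measurableSet_Ioc,
      inter_eq_self_of_subset_left (Ioc_subset_Icc_self.trans (Icc_subset_Icc_right hx.2)),
      intervalIntegral.integral_of_le hx.1]
  have step1' : ∫ x in Icc a b, (∫ t in a..x, F t) * ψ' x
      = ∫ x, (∫ t, ((Ioc a x).indicator F t) * ψ' x ∂ν) ∂ν :=
    setIntegral_congr_fun measurableSet_Icc step1
  rw [step1']
  have hS : MeasurableSet {z : ℝ × ℝ | a < z.2 ∧ z.2 ≤ z.1} :=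
    (measurableSet_lt measurable_const measurable_snd).inter
      (measurableSet_le measurable_snd measurable_fst)
  have hint : Integrable (Function.uncurry fun x t => ((Ioc a x).indicator F t) * ψ' x)
      (ν.prod ν) := by
    have h0 : Integrable (fun z : ℝ × ℝ => ψ' z.1 * F z.2) (ν.prod ν) :=
      hψ'int.mul_prod hF
    have h1 : Integrable ({z : ℝ × ℝ | a < z.2 ∧ z.2 ≤ z.1}.indicator
        fun z : ℝ × ℝ => ψ' z.1 * F z.2) (ν.prod ν) := h0.indicator hS
    refine h1.congr (Filter.Eventually.of_forall ?_)
    rintro ⟨x, t⟩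
    simp only [Function.uncurry, indicator, mem_Ioc, mem_setOf_eq]
    by_cases hc : a < t ∧ t ≤ x <;> simp [hc, mul_comm]
  rw [integral_integral_swap hint]
  have hae : ∀ᵐ t ∂ν, t ∈ Ioc a b := by
    rw [hν, ae_restrict_iff' measurableSet_Icc, ae_iff]
    refine measure_mono_null (fun t ht => ?_) (measure_singleton a)
    simp only [mem_setOf_eq] at ht
    push_neg at ht
    obtain ⟨ht1, ht2⟩ := ht
    rcases eq_or_lt_of_le ht1.1 with hq | hq
    · simp [← hq]
    · exact absurd ⟨hq, ht1.2⟩ ht2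
  refine integral_congr_ae (hae.mono fun t ht => ?_)
  dsimp only
  have key : (fun x => ((Ioc a x).indicator F t) * ψ' x)
      = (Ici t).indicator (fun x => F t * ψ' x) := by
    funext x
    simp only [indicator, mem_Ioc, mem_Ici]
    by_cases hc : t ≤ x <;> simp [hc, ht.1]
  rw [key, integral_indicator measurableSet_Ici, hν,
    Measure.restrict_restrict measurableSet_Ici]
  have hseteq : Ici t ∩ Icc a b = Icc t b := by
    ext y; simp only [mem_inter_iff, mem_Ici, mem_Icc]
    constructor
    · rintro ⟨h1, _, h3⟩; exact ⟨h1, h3⟩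
    · rintro ⟨h1, h2⟩; exact ⟨h1, ht.1.le.trans h1, h2⟩
  rw [hseteq, integral_const_mul]
  congr 1
  have : ∫ x in Icc t b, ψ' x = ∫ x in t..b, ψ' x := by
    rw [intervalIntegral.integral_of_le ht.2, integral_Icc_eq_integral_Ioc]
  rw [this, intervalIntegral.integral_eq_sub_of_hasDeriv_right_of_le ht.2
    (hψc.mono (Icc_subset_Icc_left ht.1.le))
    (fun x hx => ?_) ((hψ'.mono (Icc_subset_Icc_left ht.1.le)).intervalIntegrable_of_Icc ht.2)]
  exact ((hψ x ⟨ht.1.le.trans hx.1.le, hx.2.le⟩).hasDerivAt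
    (Icc_mem_nhds (ht.1.trans hx.1) hx.2)).hasDerivWithinAt

lemma my_ftc (a b A B : ℝ) (hAa : A ≤ a) (hab : a ≤ b) (hbB : b ≤ B)
    (ψ ψ' : ℝ → ℝ)
    (hψ : ∀ x ∈ Icc A B, HasDerivWithinAt ψ (ψ' x) (Icc A B) x)
    (hψ'c : ContinuousOn ψ' (Icc A B)) :
    ∫ x in a..b, ψ' x = ψ b - ψ a := by
  have hsub : Icc a b ⊆ Icc A B := Icc_subset_Icc hAa hbB
  have hψc : ContinuousOn ψ (Icc A B) := fun x hx => (hψ x hx).continuousWithinAt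
  refine intervalIntegral.integral_eq_sub_of_hasDeriv_right_of_le hab (hψc.mono hsub)
    (fun x hx => ?_) ((hψ'c.mono hsub).intervalIntegrable_of_Icc hab)
  have hxAB : x ∈ Icc A B := hsub ⟨hx.1.le, hx.2.le⟩
  exact ((hψ x hxAB).hasDerivAt
    (Icc_mem_nhds (lt_of_le_of_lt hAa hx.1) (lt_of_lt_of_le hx.2 hbB))).hasDerivWithinAt

lemma my_meas (T : ℝ) (k : ℝ → ℝ → ℝ)
    (hk1 : ∀ s : ℝ, 0 ≤ s → Measurable fun x => k x s)
    (hk2 : ∀ᵐ x ∂(volume.restrict (Icc (0:ℝ) T)), ContinuousOn (fun s => k x s) (Ici (0:ℝ)))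
    (u : ℝ → ℝ) (hu : ContinuousOn u (Icc (0:ℝ) T))
    (hu0 : ∀ x ∈ Icc (0:ℝ) T, 0 ≤ u x) :
    AEMeasurable (fun x => k x (u x)) (volume.restrict (Icc (0:ℝ) T)) := by
  set ν := volume.restrict (Icc (0:ℝ) T) with hν
  have huae : AEMeasurable u ν := (hu.aemeasurable measurableSet_Icc)
  set up : ℝ → ℝ := fun x => max (u x) 0 with hup
  have hupae : AEMeasurable up ν := huae.max aemeasurable_const
  set v : ℕ → ℝ → ℝ := fun n x => (⌊(n + 1 : ℝ) * up x⌋₊ : ℝ) / (n + 1) with hv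
  have hvmeas : ∀ n, AEMeasurable (fun x => k x (v n x)) ν := by
    intro n
    have hm : AEMeasurable (fun x => ⌊(n + 1 : ℝ) * up x⌋₊) ν :=
      (measurable_id.nat_floor.comp_aemeasurable (aemeasurable_const.mul hupae))
    have hF : Measurable (fun p : ℝ × ℕ => k p.1 ((p.2 : ℝ) / (n + 1))) := by
      refine measurable_from_prod_countable_left fun j => ?_
      exact hk1 ((j : ℝ) / (n + 1)) (by positivity)
    have : AEMeasurable (fun x => (x, ⌊(n + 1 : ℝ) * up x⌋₊)) ν :=
      aemeasurable_id.prodMk hm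
    exact hF.comp_aemeasurable this
  refine aemeasurable_of_tendsto_metrizable_ae atTop hvmeas ?_
  filter_upwards [hk2, ae_restrict_mem measurableSet_Icc] with x hc hx
  have hux : 0 ≤ u x := hu0 x hx
  have hupx : up x = u x := max_eq_left hux
  have hvle : ∀ n, v n x ≤ u x := by
    intro n
    rw [hv]
    dsimp only
    rw [hupx, div_le_iff₀ (by positivity)]
    calc (⌊(n + 1 : ℝ) * u x⌋₊ : ℝ) ≤ (n + 1 : ℝ) * u x := Nat.floor_le (by positivity)
    _ = u x * (n + 1) := mul_comm _ _
  have hvgt : ∀ n, u x - 1 / (n + 1) < v n x := by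
    intro n
    rw [hv]; dsimp only
    rw [hupx, sub_lt_iff_lt_add, ← add_div, lt_div_iff₀ (by positivity)]
    calc u x * (n + 1) = (n + 1 : ℝ) * u x := by ring
    _ < ⌊(n + 1 : ℝ) * u x⌋₊ + 1 := Nat.lt_floor_add_one _
  have hvnn : ∀ n, 0 ≤ v n x := fun n => by positivity
  have htend : Tendsto (fun n => v n x) atTop (𝓝 (u x)) := by
    refine tendsto_of_tendsto_of_tendsto_of_le_of_le (g := fun n : ℕ => u x - 1 / (n + 1))
      (h := fun _ : ℕ => u x) ?_ tendsto_const_nhds (fun n => (hvgt n).le) hvle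
    have : Tendsto (fun n : ℕ => 1 / ((n : ℝ) + 1)) atTop (𝓝 0) :=
      tendsto_one_div_add_atTop_nhds_zero_nat
    simpa using tendsto_const_nhds.sub this
  have : Tendsto (fun n => v n x) atTop (𝓝[Ici (0:ℝ)] (u x)) := by
    rw [tendsto_nhdsWithin_iff]
    exact ⟨htend, Eventually.of_forall fun n => hvnn n⟩
  exact (hc (u x) hux).tendsto.comp this

set_option maxHeartbeats 1000000 in
theorem statement_19'
    (T : ℝ) (hT : 0 < T)
    (h : ℝ → ℝ → ℝ)
    (x₁ x₂ : ℝ) (hx1 : 0 ≤ x₁) (hx12 : x₁ ≤ x₂) (hx2 : x₂ ≤ T)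
    (hh0 : ∀ᵐ x ∂(volume.restrict (Icc x₁ x₂)), ∀ s : ℝ, 0 ≤ s → 0 ≤ h x s)
    (q : ℝ → ℝ)
    (hq0 : ∀ᵐ x ∂(volume.restrict (Icc x₁ x₂)), 0 ≤ q x)
    (hqint : IntegrableOn q (Icc x₁ x₂) volume)
    (hqne : ¬ (∀ᵐ x ∂(volume.restrict (Icc x₁ x₂)), q x = 0))
    (hliminf : ∀ ε : ℝ, 0 < ε → ∃ s₀ > (0:ℝ),
      ∀ᵐ x ∂(volume.restrict (Icc x₁ x₂)), ∀ s : ℝ, s₀ ≤ s →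
        (q x - ε) * s ≤ h x s)
    (heig : ∃ μ : ℝ, 0 < μ ∧ μ < 1 ∧ ∃ φ φ' : ℝ → ℝ,
      (∀ x ∈ Icc x₁ x₂, HasDerivWithinAt φ (φ' x) (Icc x₁ x₂) x) ∧
      ContinuousOn φ' (Icc x₁ x₂) ∧
      (∀ x ∈ Ioo x₁ x₂, 0 < φ x) ∧ φ x₁ = 0 ∧ φ x₂ = 0 ∧
      ∀ x ∈ Icc x₁ x₂, φ' x = φ' x₁ - μ * ∫ t in x₁..x, q t * φ t) :
    ∃ R : ℝ, 0 < R ∧ ∀ k : ℝ → ℝ → ℝ,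
      ((∀ s : ℝ, 0 ≤ s → Measurable fun x => k x s) ∧
      (∀ᵐ x ∂(volume.restrict (Icc (0:ℝ) T)), ContinuousOn (fun s => k x s) (Ici (0:ℝ))) ∧
      ∀ ρ : ℝ, 0 < ρ → ∃ γ : ℝ → ℝ, (∀ x, 0 ≤ γ x) ∧
        IntegrableOn γ (Icc (0:ℝ) T) volume ∧
        ∀ᵐ x ∂(volume.restrict (Icc (0:ℝ) T)), ∀ s : ℝ, 0 ≤ s → s ≤ ρ → |k x s| ≤ γ x) →
      (∀ᵐ x ∂(volume.restrict (Icc x₁ x₂)), ∀ s : ℝ, 0 ≤ s → h x s ≤ k x s) →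
      ∀ u u' : ℝ → ℝ,
        ((∀ x ∈ Icc (0:ℝ) T, HasDerivWithinAt u (u' x) (Icc (0:ℝ) T) x) ∧
        ContinuousOn u' (Icc (0:ℝ) T) ∧
        ∀ x ∈ Icc (0:ℝ) T, u' x = u' 0 - ∫ t in (0:ℝ)..x, k t (u t)) →
        (∀ x ∈ Icc (0:ℝ) T, 0 ≤ u x) →
        ∀ x ∈ Icc x₁ x₂, u x < R := by
  obtain ⟨μ, hμ0, hμ1, φ, φ', hφd, hφ'c, hφpos, hφ1, hφ2, hφeq⟩ := heig
  -- x₁ < x₂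
  rcases eq_or_lt_of_le hx12 with heq | hlt
  · exfalso
    apply hqne
    have hz : volume.restrict (Icc x₁ x₂) = 0 := by
      rw [Measure.restrict_eq_zero, ← heq, Icc_self, measure_singleton]
    rw [hz]
    simp
  have hd : 0 < x₂ - x₁ := sub_pos.mpr hlt
  have hJsub : Icc x₁ x₂ ⊆ Icc (0:ℝ) T := Icc_subset_Icc hx1 hx2
  have hx1T : x₁ ∈ Icc (0:ℝ) T := ⟨hx1, le_trans hx12 hx2⟩
  have hx2T : x₂ ∈ Icc (0:ℝ) T := ⟨le_trans hx1 hx12, hx2⟩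
  have hφc : ContinuousOn φ (Icc x₁ x₂) := fun y hy => (hφd y hy).continuousWithinAt
  have hφnn : ∀ y ∈ Icc x₁ x₂, 0 ≤ φ y := by
    intro y hy
    rcases eq_or_lt_of_le hy.1 with h1 | h1
    · rw [← h1, hφ1]
    rcases eq_or_lt_of_le hy.2 with h2 | h2
    · rw [h2, hφ2]
    · exact (hφpos y ⟨h1, h2⟩).le
  have haeIoo : ∀ᵐ t ∂(volume.restrict (Icc x₁ x₂)), t ∈ Ioo x₁ x₂ := by
    rw [ae_restrict_iff' measurableSet_Icc, ae_iff]
    refine measure_mono_null (fun t ht => ?_)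
      (measure_union_null (measure_singleton x₁) (measure_singleton x₂))
    simp only [mem_setOf_eq] at ht
    push_neg at ht
    obtain ⟨ht1, ht2⟩ := ht
    simp only [mem_union, mem_singleton_iff]
    rcases eq_or_lt_of_le ht1.1 with hq1 | hq1
    · exact Or.inl hq1.symm
    rcases eq_or_lt_of_le ht1.2 with hq2 | hq2
    · exact Or.inr hq2
    · exact absurd ⟨hq1, hq2⟩ ht2
  have hνne : volume.restrict (Icc x₁ x₂) ≠ 0 := by
    rw [Ne, Measure.restrict_eq_zero, Real.volume_Icc]
    simp only [ENNReal.ofReal_eq_zero, not_le]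
    linarith
  set W : ℝ → ℝ := fun t => min (t - x₁) (x₂ - t) with hWdef
  have hWc : Continuous W :=
    (continuous_id.sub continuous_const).min (continuous_const.sub continuous_id)
  have hWnn : ∀ t ∈ Icc x₁ x₂, 0 ≤ W t := fun t ht =>
    le_min (sub_nonneg.mpr ht.1) (sub_nonneg.mpr ht.2)
  have hqφint : IntegrableOn (fun t => q t * φ t) (Icc x₁ x₂) volume :=
    hqint.mul_continuousOn hφc isCompact_Icc
  set A := ∫ t in Icc x₁ x₂, q t * (W t * φ t) with hA
  set B := ∫ t in Icc x₁ x₂, φ t with hB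
  set C := ∫ t in Icc x₁ x₂, q t * φ t with hC
  have hApos : 0 < A := by
    have hint : IntegrableOn (fun t => q t * (W t * φ t)) (Icc x₁ x₂) volume :=
      hqint.mul_continuousOn ((hWc.continuousOn).mul hφc) isCompact_Icc
    have hnn : 0 ≤ᵐ[volume.restrict (Icc x₁ x₂)] fun t => q t * (W t * φ t) := by
      filter_upwards [hq0, ae_restrict_mem measurableSet_Icc] with t h1 h2
      exact mul_nonneg h1 (mul_nonneg (hWnn t h2) (hφnn t h2))
    rcases (integral_nonneg_of_ae hnn).lt_or_eq with hp | hz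
    · exact hp
    exfalso
    apply hqne
    have hzz : (fun t => q t * (W t * φ t)) =ᵐ[volume.restrict (Icc x₁ x₂)] 0 :=
      (integral_eq_zero_iff_of_nonneg_ae hnn hint).mp hz.symm
    filter_upwards [hzz, haeIoo] with t h1 h2
    have hWpos : 0 < W t := lt_min (sub_pos.mpr h2.1) (sub_pos.mpr h2.2)
    have hp : 0 < W t * φ t := mul_pos hWpos (hφpos t h2)
    simp only [Pi.zero_apply] at h1
    rcases mul_eq_zero.mp h1 with h' | h'
    · exact h'
    · exact absurd h' (ne_of_gt hp)
  have hBpos : 0 < B := by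
    have hnn : 0 ≤ᵐ[volume.restrict (Icc x₁ x₂)] φ := by
      filter_upwards [ae_restrict_mem measurableSet_Icc] with t ht
      exact hφnn t ht
    rcases (integral_nonneg_of_ae hnn).lt_or_eq with hp | hz
    · exact hp
    exfalso
    have hzz : φ =ᵐ[volume.restrict (Icc x₁ x₂)] 0 :=
      (integral_eq_zero_iff_of_nonneg_ae hnn (hφc.integrableOn_compact isCompact_Icc)).mp hz.symm
    have hFalse : ∀ᵐ t ∂(volume.restrict (Icc x₁ x₂)), False := by
      filter_upwards [hzz, haeIoo] with t h1 h2
      exact absurd h1 (ne_of_gt (hφpos t h2))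
    haveI := ae_neBot.mpr hνne
    obtain ⟨t, ht⟩ := hFalse.exists
    exact ht
  have hC0 : 0 ≤ C := by
    refine integral_nonneg_of_ae ?_
    filter_upwards [hq0, ae_restrict_mem measurableSet_Icc] with t h1 h2
    exact mul_nonneg h1 (hφnn t h2)
  -- signs of φ' at the endpoints
  have hφ'1 : 0 ≤ φ' x₁ := by
    have hder := (hasDerivWithinAt_iff_tendsto_slope).mp (hφd x₁ ⟨le_refl _, hlt.le⟩)
    have hmono : 𝓝[Ioc x₁ x₂] x₁ ≤ 𝓝[Icc x₁ x₂ \ {x₁}] x₁ :=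
      nhdsWithin_mono _ (fun y hy => ⟨⟨hy.1.le, hy.2⟩, by simp [ne_of_gt hy.1]⟩)
    have hd' : Tendsto (slope φ x₁) (𝓝[Ioc x₁ x₂] x₁) (𝓝 (φ' x₁)) := hder.mono_left hmono
    haveI : (𝓝[Ioc x₁ x₂] x₁).NeBot := by
      rw [← mem_closure_iff_nhdsWithin_neBot, closure_Ioc (ne_of_lt hlt)]
      exact ⟨le_refl _, hlt.le⟩
    refine ge_of_tendsto hd' ?_
    filter_upwards [self_mem_nhdsWithin] with y hy
    rw [slope_def_field, hφ1]
    apply div_nonneg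
    · simpa using hφnn y ⟨hy.1.le, hy.2⟩
    · simp [sub_nonneg, hy.1.le]
  have hφ'2 : φ' x₂ ≤ 0 := by
    have hder := (hasDerivWithinAt_iff_tendsto_slope).mp (hφd x₂ ⟨hlt.le, le_refl _⟩)
    have hmono : 𝓝[Ico x₁ x₂] x₂ ≤ 𝓝[Icc x₁ x₂ \ {x₂}] x₂ :=
      nhdsWithin_mono _ (fun y hy => ⟨⟨hy.1, hy.2.le⟩, by simp [ne_of_lt hy.2]⟩)
    have hd' : Tendsto (slope φ x₂) (𝓝[Ico x₁ x₂] x₂) (𝓝 (φ' x₂)) := hder.mono_left hmono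
    haveI : (𝓝[Ico x₁ x₂] x₂).NeBot := by
      rw [← mem_closure_iff_nhdsWithin_neBot, closure_Ico (ne_of_lt hlt)]
      exact ⟨hlt.le, le_refl _⟩
    refine le_of_tendsto hd' ?_
    filter_upwards [self_mem_nhdsWithin] with y hy
    rw [slope_def_field, hφ2]
    apply div_nonpos_of_nonneg_of_nonpos
    · simpa using hφnn y ⟨hy.1, hy.2.le⟩
    · simp [sub_nonpos, hy.2.le]
  have hμC : μ * C = φ' x₁ - φ' x₂ := by
    have he := hφeq x₂ ⟨hx12, le_refl _⟩
    rw [intervalIntegral.integral_of_le hx12, ← integral_Icc_eq_integral_Ioc, ← hC] at he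
    linarith
  have hμ' : 0 < 1 - μ := by linarith
  set ε := (1 - μ) * A / (2 * B * (x₂ - x₁)) with hεdef
  have hεpos : 0 < ε := by
    rw [hεdef]
    positivity
  obtain ⟨s₀, hs₀, hlim⟩ := hliminf ε hεpos
  have hRnn : 0 ≤ 2 * s₀ * C * (x₂ - x₁) / ((1 - μ) * A) :=
    div_nonneg (mul_nonneg (mul_nonneg (by positivity) hC0) hd.le)
      (mul_pos hμ' hApos).le
  refine ⟨2 * s₀ * C * (x₂ - x₁) / ((1 - μ) * A) + 1, by linarith, ?_⟩
  rintro k ⟨hkmeas, hkcont, hkbound⟩ hhk u u' ⟨hud, hu'c, hueq⟩ hun y₀ hy₀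
  have huc : ContinuousOn u (Icc (0:ℝ) T) := fun y hy => (hud y hy).continuousWithinAt
  set g : ℝ → ℝ := fun t => k t (u t) with hgdef
  -- integrability of g
  obtain ⟨ρ0, hρ0⟩ := isCompact_Icc.exists_bound_of_continuousOn huc
  have hρ0nn : 0 ≤ ρ0 := le_trans (norm_nonneg (u 0)) (hρ0 0 ⟨le_refl _, hT.le⟩)
  obtain ⟨γ, hγnn, hγint, hγae⟩ := hkbound (ρ0 + 1) (by linarith)
  have hgaesm : AEStronglyMeasurable g (volume.restrict (Icc (0:ℝ) T)) :=
    (my_meas T k hkmeas hkcont u huc hun).aestronglyMeasurable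
  have hgint : IntegrableOn g (Icc (0:ℝ) T) volume := by
    refine Integrable.mono' hγint hgaesm ?_
    filter_upwards [hγae, ae_restrict_mem measurableSet_Icc] with t h1 ht
    have h2 : ‖u t‖ ≤ ρ0 := hρ0 t ht
    rw [Real.norm_eq_abs] at h2 ⊢
    exact h1 (u t) (hun t ht) (by linarith [le_abs_self (u t)])
  have hgJint : IntegrableOn g (Icc x₁ x₂) volume := hgint.mono_set hJsub
  have hgii : ∀ a b : ℝ, 0 ≤ a → a ≤ b → b ≤ T → IntervalIntegrable g volume a b := by
    intro a b h1 h2 h3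
    rw [intervalIntegrable_iff_integrableOn_Ioc_of_le h2]
    exact hgint.mono_set (fun t ht => ⟨le_trans h1 ht.1.le, le_trans ht.2 h3⟩)
  have hgnn : ∀ᵐ t ∂(volume.restrict (Icc x₁ x₂)), 0 ≤ g t := by
    filter_upwards [hh0, hhk, ae_restrict_mem measurableSet_Icc] with t h1 h2 ht
    exact le_trans (h1 (u t) (hun t (hJsub ht))) (h2 (u t) (hun t (hJsub ht)))
  -- derivative identity on J
  have huder : ∀ y ∈ Icc x₁ x₂, u' y = u' x₁ - ∫ t in x₁..y, g t := by
    intro y hy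
    have hyT : y ∈ Icc (0:ℝ) T := hJsub hy
    have e1 := hueq y hyT
    have e2 := hueq x₁ hx1T
    have hadd := intervalIntegral.integral_add_adjacent_intervals
      (hgii 0 x₁ le_rfl hx1 hx1T.2) (hgii x₁ y hx1 hy.1 hyT.2)
    rw [e1, e2]
    linarith
  -- u' is antitone on J
  have hu'mono : ∀ a b : ℝ, x₁ ≤ a → a ≤ b → b ≤ x₂ → u' b ≤ u' a := by
    intro a b h1 h2 h3
    have ha := huder a ⟨h1, le_trans h2 h3⟩
    have hb := huder b ⟨le_trans h1 h2, h3⟩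
    have hadd := intervalIntegral.integral_add_adjacent_intervals
      (hgii x₁ a hx1 h1 (le_trans (le_trans h2 h3) hx2))
      (hgii a b (le_trans hx1 h1) h2 (le_trans h3 hx2))
    have hpos : 0 ≤ ∫ t in a..b, g t := by
      refine intervalIntegral.integral_nonneg_of_ae_restrict h2 ?_
      exact ae_restrict_of_ae_restrict_of_subset (Icc_subset_Icc h1 h3) hgnn
    linarith
  have hftcu : ∀ a b : ℝ, 0 ≤ a → a ≤ b → b ≤ T → ∫ y in a..b, u' y = u b - u a :=
    fun a b h1 h2 h3 => my_ftc a b 0 T h1 h2 h3 u u' hud hu'c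
  have hu'ii : ∀ a b : ℝ, x₁ ≤ a → a ≤ b → b ≤ x₂ → IntervalIntegrable u' volume a b :=
    fun a b h1 h2 h3 =>
      (hu'c.mono (Icc_subset_Icc (le_trans hx1 h1) (le_trans h3 hx2))).intervalIntegrable_of_Icc h2
  -- maximum point
  obtain ⟨c, hcJ, hcmax⟩ := isCompact_Icc.exists_isMaxOn (nonempty_Icc.mpr hx12) (huc.mono hJsub)
  have hcmax' : ∀ y ∈ Icc x₁ x₂, u y ≤ u c := fun y hy => hcmax hy
  have hMnn : 0 ≤ u c := hun c (hJsub hcJ)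
  -- chord bound
  have hchord : ∀ y ∈ Icc x₁ x₂, u c * W y ≤ u y * (x₂ - x₁) := by
    intro y hy
    have huy : 0 ≤ u y := hun y (hJsub hy)
    rcases le_total y c with hyc | hcy
    · have hb1 : (y - x₁) * u' y ≤ u y - u x₁ := by
        have hf := hftcu x₁ y hx1 hy.1 (le_trans hy.2 hx2)
        have hm := intervalIntegral.integral_mono_on hy.1
          (intervalIntegrable_const) (hu'ii x₁ y le_rfl hy.1 hy.2)
          (fun z hz => hu'mono z y hz.1 hz.2 hy.2)
        rw [intervalIntegral.integral_const, hf, smul_eq_mul] at hm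
        linarith
      have hb2 : u c - u y ≤ (c - y) * u' y := by
        have hf := hftcu y c (le_trans hx1 hy.1) hyc (le_trans hcJ.2 hx2)
        have hm := intervalIntegral.integral_mono_on hyc
          (hu'ii y c hy.1 hyc hcJ.2) (intervalIntegrable_const)
          (fun z hz => hu'mono y z hy.1 hz.1 (le_trans hz.2 hcJ.2))
        rw [intervalIntegral.integral_const, hf, smul_eq_mul] at hm
        linarith
      have m1 := mul_le_mul_of_nonneg_left hb1 (sub_nonneg.mpr hyc)
      have m2 := mul_le_mul_of_nonneg_left hb2 (sub_nonneg.mpr hy.1)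
      have hWle : W y ≤ y - x₁ := min_le_left _ _
      have hux1 : 0 ≤ u x₁ := hun x₁ hx1T
      nlinarith [mul_le_mul_of_nonneg_left hWle hMnn,
        mul_nonneg (sub_nonneg.mpr hyc) hux1,
        mul_nonneg huy (sub_nonneg.mpr hcJ.2)]
    · have hb1 : (y - c) * u' y ≤ u y - u c := by
        have hf := hftcu c y (le_trans hx1 hcJ.1) hcy (le_trans hy.2 hx2)
        have hm := intervalIntegral.integral_mono_on hcy
          (intervalIntegrable_const) (hu'ii c y hcJ.1 hcy hy.2)
          (fun z hz => hu'mono z y (le_trans hcJ.1 hz.1) hz.2 hy.2)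
        rw [intervalIntegral.integral_const, hf, smul_eq_mul] at hm
        linarith
      have hb2 : u x₂ - u y ≤ (x₂ - y) * u' y := by
        have hf := hftcu y x₂ (le_trans hx1 hy.1) hy.2 hx2
        have hm := intervalIntegral.integral_mono_on hy.2
          (hu'ii y x₂ hy.1 hy.2 le_rfl) (intervalIntegrable_const)
          (fun z hz => hu'mono y z hy.1 hz.1 hz.2)
        rw [intervalIntegral.integral_const, hf, smul_eq_mul] at hm
        linarith
      have m1 := mul_le_mul_of_nonneg_left hb1 (sub_nonneg.mpr hy.2)
      have m2 := mul_le_mul_of_nonneg_left hb2 (sub_nonneg.mpr hcy)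
      have hWle : W y ≤ x₂ - y := min_le_right _ _
      have hux2 : 0 ≤ u x₂ := hun x₂ hx2T
      nlinarith [mul_le_mul_of_nonneg_left hWle hMnn,
        mul_nonneg (sub_nonneg.mpr hcy) hux2,
        mul_nonneg huy (sub_nonneg.mpr hcJ.1)]
  -- the integral identity machinery
  have hudJ : ∀ z ∈ Icc x₁ x₂, HasDerivWithinAt u (u' z) (Icc x₁ x₂) z :=
    fun z hz => (hud z (hJsub hz)).mono hJsub
  have hu'cJ : ContinuousOn u' (Icc x₁ x₂) := hu'c.mono hJsub
  have hGc : ContinuousOn (fun y => ∫ t in x₁..y, g t) (Icc x₁ x₂) := by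
    have h0 := intervalIntegral.continuousOn_primitive_Icc hgJint
    refine ContinuousOn.congr h0 fun y hy => ?_
    rw [intervalIntegral.integral_of_le hy.1, integral_Icc_eq_integral_Ioc]
  have hΦc : ContinuousOn (fun y => ∫ t in x₁..y, q t * φ t) (Icc x₁ x₂) := by
    have h0 := intervalIntegral.continuousOn_primitive_Icc hqφint
    refine ContinuousOn.congr h0 fun y hy => ?_
    rw [intervalIntegral.integral_of_le hy.1, integral_Icc_eq_integral_Ioc]
  have hφ'setint : ∫ y in Icc x₁ x₂, φ' y = 0 := by
    rw [integral_Icc_eq_integral_Ioc, ← intervalIntegral.integral_of_le hx12,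
      my_ftc x₁ x₂ x₁ x₂ le_rfl hx12 le_rfl φ φ' hφd hφ'c, hφ1, hφ2]
    ring
  have hu'setint : ∫ y in Icc x₁ x₂, u' y = u x₂ - u x₁ := by
    rw [integral_Icc_eq_integral_Ioc, ← intervalIntegral.integral_of_le hx12]
    exact hftcu x₁ x₂ hx1 hx12 hx2
  have hφ'int : IntegrableOn φ' (Icc x₁ x₂) volume := hφ'c.integrableOn_compact isCompact_Icc
  have hqφuint : IntegrableOn (fun t => q t * φ t * u t) (Icc x₁ x₂) volume :=
    hqφint.mul_continuousOn (huc.mono hJsub) isCompact_Icc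
  have stepA : ∫ y in Icc x₁ x₂, u' y * φ' y = ∫ t in Icc x₁ x₂, g t * φ t := by
    have e1 : ∫ y in Icc x₁ x₂, u' y * φ' y
        = ∫ y in Icc x₁ x₂, (u' x₁ * φ' y - (∫ t in x₁..y, g t) * φ' y) :=
      setIntegral_congr_fun measurableSet_Icc (fun y hy => by rw [huder y hy]; ring)
    have i1 : IntegrableOn (fun y => u' x₁ * φ' y) (Icc x₁ x₂) volume := hφ'int.const_mul _
    have i2 : IntegrableOn (fun y => (∫ t in x₁..y, g t) * φ' y) (Icc x₁ x₂) volume :=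
      (hGc.mul hφ'c).integrableOn_compact isCompact_Icc
    rw [e1, integral_sub i1 i2, integral_const_mul, hφ'setint, mul_zero]
    have hparts := my_parts x₁ x₂ hx12 g φ φ' hgJint hφd hφ'c
    rw [hφ2] at hparts
    rw [hparts]
    simp only [zero_sub, mul_neg, integral_neg]
    ring
  have stepB : ∫ y in Icc x₁ x₂, u' y * φ' y
      = φ' x₁ * (u x₂ - u x₁)
        - μ * (u x₂ * C - ∫ t in Icc x₁ x₂, q t * φ t * u t) := by
    have e1 : ∫ y in Icc x₁ x₂, u' y * φ' y
        = ∫ y in Icc x₁ x₂,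
            (φ' x₁ * u' y - μ * ((∫ t in x₁..y, q t * φ t) * u' y)) :=
      setIntegral_congr_fun measurableSet_Icc (fun y hy => by rw [hφeq y hy]; ring)
    have hu'intJ : IntegrableOn u' (Icc x₁ x₂) volume := hu'cJ.integrableOn_compact isCompact_Icc
    have i1 : IntegrableOn (fun y => φ' x₁ * u' y) (Icc x₁ x₂) volume := hu'intJ.const_mul _
    have i2 : IntegrableOn (fun y => (∫ t in x₁..y, q t * φ t) * u' y) (Icc x₁ x₂) volume :=
      (hΦc.mul hu'cJ).integrableOn_compact isCompact_Icc
    rw [e1, integral_sub i1 (i2.const_mul μ), integral_const_mul, hu'setint, integral_const_mul]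
    have hparts := my_parts x₁ x₂ hx12 (fun t => q t * φ t) u u' hqφint hudJ hu'cJ
    rw [hparts]
    have i3 : IntegrableOn (fun t => q t * φ t * u x₂) (Icc x₁ x₂) volume := hqφint.mul_const _
    have e2 : ∫ t in Icc x₁ x₂, q t * φ t * (u x₂ - u t)
        = ∫ t in Icc x₁ x₂, (q t * φ t * u x₂ - q t * φ t * u t) :=
      setIntegral_congr_fun measurableSet_Icc (fun t _ => by ring)
    rw [e2, integral_sub i3 hqφuint]
    have e3 : ∫ t in Icc x₁ x₂, q t * φ t * u x₂ = C * u x₂ := by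
      rw [hC, ← integral_mul_const]
    rw [e3]
    ring
  -- the main comparison inequalities
  set P := ∫ t in Icc x₁ x₂, q t * φ t * u t with hP
  have huφint : IntegrableOn (fun t => u t * φ t) (Icc x₁ x₂) volume :=
    ((huc.mono hJsub).mul hφc).integrableOn_compact isCompact_Icc
  have hgφint : IntegrableOn (fun t => g t * φ t) (Icc x₁ x₂) volume :=
    hgJint.mul_continuousOn hφc isCompact_Icc
  have hAint : IntegrableOn (fun t => q t * (W t * φ t)) (Icc x₁ x₂) volume :=
    hqint.mul_continuousOn ((hWc.continuousOn).mul hφc) isCompact_Icc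
  clear_value W A B C ε P
  have hE2 : ∫ t in Icc x₁ x₂, g t * φ t ≤ μ * P := by
    have hid : ∫ t in Icc x₁ x₂, g t * φ t
        = φ' x₁ * (u x₂ - u x₁) - μ * (u x₂ * C - P) := by rw [← stepA, stepB]
    have hsub : μ * (u x₂ * C) = u x₂ * (φ' x₁ - φ' x₂) := by rw [← hμC]; ring
    have h1 : 0 ≤ φ' x₁ * u x₁ := mul_nonneg hφ'1 (hun x₁ hx1T)
    have h2 : φ' x₂ * u x₂ ≤ 0 := mul_nonpos_iff.mpr (Or.inr ⟨hφ'2, hun x₂ hx2T⟩)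
    nlinarith [hid, hsub, h1, h2]
  have hE1 : P - ε * (∫ t in Icc x₁ x₂, u t * φ t) - s₀ * C
      ≤ ∫ t in Icc x₁ x₂, g t * φ t := by
    have hLint : IntegrableOn
        (fun t => q t * φ t * u t - ε * (u t * φ t) - s₀ * (q t * φ t)) (Icc x₁ x₂) volume :=
      (hqφuint.sub (huφint.const_mul ε)).sub (hqφint.const_mul s₀)
    have hmono : ∫ t in Icc x₁ x₂, (q t * φ t * u t - ε * (u t * φ t) - s₀ * (q t * φ t))
        ≤ ∫ t in Icc x₁ x₂, g t * φ t := by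
      refine integral_mono_ae hLint hgφint ?_
      filter_upwards [hh0, hhk, hlim, hq0, ae_restrict_mem measurableSet_Icc]
        with t h1 h2 h3 h4 ht
      have hut : 0 ≤ u t := hun t (hJsub ht)
      have hφt : 0 ≤ φ t := hφnn t ht
      have hh' : (q t - ε) * u t - q t * s₀ ≤ h t (u t) := by
        rcases le_total s₀ (u t) with hc | hc
        · have := h3 (u t) hc
          nlinarith [mul_nonneg h4 hs₀.le]
        · have h0' := h1 (u t) hut
          nlinarith [mul_nonneg h4 (sub_nonneg.mpr hc), mul_nonneg hεpos.le hut]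
      have hkg := mul_le_mul_of_nonneg_right (le_trans hh' (h2 (u t) hut)) hφt
      nlinarith [hkg]
    have hsplit : ∫ t in Icc x₁ x₂, (q t * φ t * u t - ε * (u t * φ t) - s₀ * (q t * φ t))
        = P - ε * (∫ t in Icc x₁ x₂, u t * φ t) - s₀ * C := by
      have i5 : IntegrableOn (fun t => q t * φ t * u t - ε * (u t * φ t)) (Icc x₁ x₂) volume :=
        hqφuint.sub (huφint.const_mul ε)
      have i6 : IntegrableOn (fun t => s₀ * (q t * φ t)) (Icc x₁ x₂) volume :=
        hqφint.const_mul s₀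
      have i7 : IntegrableOn (fun t => ε * (u t * φ t)) (Icc x₁ x₂) volume :=
        huφint.const_mul ε
      rw [integral_sub i5 i6, integral_sub hqφuint i7, integral_const_mul, integral_const_mul,
        hP, hC]
    linarith [hsplit ▸ hmono]
  have hE3 : u c / (x₂ - x₁) * A ≤ P := by
    have hmono : ∫ t in Icc x₁ x₂, u c / (x₂ - x₁) * (q t * (W t * φ t))
        ≤ ∫ t in Icc x₁ x₂, q t * φ t * u t := by
      refine integral_mono_ae (hAint.const_mul _) hqφuint ?_
      filter_upwards [hq0, ae_restrict_mem measurableSet_Icc] with t h4 ht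
      have hch := hchord t ht
      have h5 : 0 ≤ q t * φ t := mul_nonneg h4 (hφnn t ht)
      have h6 := mul_le_mul_of_nonneg_left hch h5
      rw [div_mul_eq_mul_div, div_le_iff₀ hd]
      nlinarith [h6]
    calc u c / (x₂ - x₁) * A = ∫ t in Icc x₁ x₂, u c / (x₂ - x₁) * (q t * (W t * φ t)) := by
          rw [integral_const_mul, ← hA]
    _ ≤ P := by rw [hP]; exact hmono
  have hE4 : ∫ t in Icc x₁ x₂, u t * φ t ≤ u c * B := by
    have hmono : ∫ t in Icc x₁ x₂, u t * φ t ≤ ∫ t in Icc x₁ x₂, u c * φ t := by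
      refine integral_mono_ae huφint
        ((hφc.integrableOn_compact isCompact_Icc).const_mul _) ?_
      filter_upwards [ae_restrict_mem measurableSet_Icc] with t ht
      exact mul_le_mul_of_nonneg_right (hcmax' t ht) (hφnn t ht)
    calc ∫ t in Icc x₁ x₂, u t * φ t ≤ ∫ t in Icc x₁ x₂, u c * φ t := hmono
    _ = u c * B := by rw [integral_const_mul, ← hB]
  -- final algebra
  have hstep1 : (1 - μ) * P ≤ ε * (u c * B) + s₀ * C := by
    have h4 := mul_le_mul_of_nonneg_left hE4 hεpos.le
    linarith [hE1, hE2, h4]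
  have hstep2 : u c * A ≤ P * (x₂ - x₁) := by
    have h := hE3
    rw [div_mul_eq_mul_div, div_le_iff₀ hd] at h
    linarith
  have hBne : B ≠ 0 := ne_of_gt hBpos
  have hdne : x₂ - x₁ ≠ 0 := ne_of_gt hd
  have hstep3 : ε * (u c * B) * (2 * (x₂ - x₁)) = (1 - μ) * A * u c := by
    rw [hεdef]
    field_simp
  have hstep4 : (1 - μ) * P * (2 * (x₂ - x₁)) ≤ (ε * (u c * B) + s₀ * C) * (2 * (x₂ - x₁)) :=
    mul_le_mul_of_nonneg_right hstep1 (by linarith)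
  have hstep5 : (1 - μ) * 2 * (u c * A) ≤ (1 - μ) * 2 * (P * (x₂ - x₁)) :=
    mul_le_mul_of_nonneg_left hstep2 (by linarith)
  have hM : u c ≤ 2 * s₀ * C * (x₂ - x₁) / ((1 - μ) * A) := by
    rw [le_div_iff₀ (mul_pos hμ' hApos)]
    nlinarith [hstep3, hstep4, hstep5]
  have hfin := hcmax' y₀ hy₀
  linarith
theorem statement_19
    (T : ℝ) (hT : 0 < T)
    (h : ℝ → ℝ → ℝ) (hCar : L1Caratheodory T h)
    (x₁ x₂ : ℝ) (hx1 : 0 ≤ x₁) (hx12 : x₁ ≤ x₂) (hx2 : x₂ ≤ T)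
    (hh0 : ∀ᵐ x ∂(volume.restrict (Icc x₁ x₂)), ∀ s : ℝ, 0 ≤ s → 0 ≤ h x s)
    (q : ℝ → ℝ)
    (hq0 : ∀ᵐ x ∂(volume.restrict (Icc x₁ x₂)), 0 ≤ q x)
    (hqint : IntegrableOn q (Icc x₁ x₂) volume)
    (hqne : ¬ (∀ᵐ x ∂(volume.restrict (Icc x₁ x₂)), q x = 0))
    (hliminf : ∀ ε : ℝ, 0 < ε → ∃ s₀ > (0:ℝ),
      ∀ᵐ x ∂(volume.restrict (Icc x₁ x₂)), ∀ s : ℝ, s₀ ≤ s →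
        (q x - ε) * s ≤ h x s)
    (heig : ∃ μ : ℝ, 0 < μ ∧ μ < 1 ∧ ∃ φ φ' : ℝ → ℝ,
      (∀ x ∈ Icc x₁ x₂, HasDerivWithinAt φ (φ' x) (Icc x₁ x₂) x) ∧
      ContinuousOn φ' (Icc x₁ x₂) ∧
      (∀ x ∈ Ioo x₁ x₂, 0 < φ x) ∧ φ x₁ = 0 ∧ φ x₂ = 0 ∧
      ∀ x ∈ Icc x₁ x₂, φ' x = φ' x₁ - μ * ∫ t in x₁..x, q t * φ t) :
    ∃ R : ℝ, 0 < R ∧ ∀ k : ℝ → ℝ → ℝ, L1CaratheodoryNonneg T k →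
      (∀ᵐ x ∂(volume.restrict (Icc x₁ x₂)), ∀ s : ℝ, 0 ≤ s → h x s ≤ k x s) →
      ∀ u u' : ℝ → ℝ, IsSolOn T (fun t => k t (u t)) u u' →
        (∀ x ∈ Icc (0:ℝ) T, 0 ≤ u x) →
        ((u' 0 = 0 ∧ u' T = 0) ∨ (u 0 = u T ∧ u' 0 = u' T)) →
        ∀ x ∈ Icc x₁ x₂, u x < R := by
  obtain ⟨R, hR, hbound⟩ := statement_19' T hT h x₁ x₂ hx1 hx12 hx2 hh0 q hq0 hqint hqne
    hliminf heig
  exact ⟨R, hR, fun k hk hhk u u' hsol hun _ => hbound k hk hhk u u' hsol hun⟩
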